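/- The function s(b) = (g(b))^(M-φ) · (1 - g(b))^φ · exp(-(4/3)·b) / B(M-φ+1, φ+1), where g(b) = 1/4 + (3/4)·exp(-(4/3)·b) and B is the Beta function, integrates over b ∈ (0, ∞) to the probability that a Beta(M-φ+1, φ+1) random variable exceeds 1/4; in particular its integral over (0, ∞) is at most 1. -/

import Mathlib

open MeasureTheory

noncomputable def jcG (b : ℝ) : ℝ := 1/4 + (3/4) * Real.exp (-(4/3) * b)

/-- The Beta function `B(a,b) = Γ(a)Γ(b)/Γ(a+b)`. -/
noncomputable def betaFun (a b : ℝ) : ℝ := Real.Gamma a * Real.Gamma b / Real.Gamma (a + b)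

lemma real_beta (a b : ℝ) (ha : 0 < a) (hb : 0 < b) :
    ∫ x in (0:ℝ)..1, x ^ (a - 1) * (1 - x) ^ (b - 1) =
      Real.Gamma a * Real.Gamma b / Real.Gamma (a + b) := by
  have hC : Complex.betaIntegral a b =
      ((∫ x in (0:ℝ)..1, x ^ (a - 1) * (1 - x) ^ (b - 1) : ℝ) : ℂ) := by
    rw [Complex.betaIntegral, ← intervalIntegral.integral_ofReal]
    apply intervalIntegral.integral_congr
    intro x hx
    rw [Set.uIcc_of_le (by norm_num : (0:ℝ) ≤ 1)] at hx
    have h1x : (0:ℝ) ≤ 1 - x := by linarith [hx.2]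
    push_cast [Complex.ofReal_cpow hx.1, Complex.ofReal_cpow h1x]
    ring
  have h := Complex.Gamma_mul_Gamma_eq_betaIntegral
    (s := (a:ℂ)) (t := (b:ℂ)) (by simpa using ha) (by simpa using hb)
  rw [hC, show ((a:ℂ) + b) = ((a + b : ℝ) : ℂ) by push_cast; ring,
      Complex.Gamma_ofReal, Complex.Gamma_ofReal, Complex.Gamma_ofReal] at h
  have h3 : Real.Gamma a * Real.Gamma b =
      Real.Gamma (a + b) * ∫ x in (0:ℝ)..1, x ^ (a - 1) * (1 - x) ^ (b - 1) := by
    exact_mod_cast h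
  have hG : Real.Gamma (a + b) ≠ 0 := (Real.Gamma_pos_of_pos (by linarith)).ne'
  field_simp
  linarith [h3]

theorem jc_sampler_density_integral (M φ : ℝ) (hφ0 : 0 ≤ φ) (hφM : φ ≤ M) :
    (∫ b in Set.Ioi (0:ℝ),
        (jcG b) ^ (M - φ) * (1 - jcG b) ^ φ * Real.exp (-(4/3) * b) /
          betaFun (M - φ + 1) (φ + 1)) =
      (∫ p in Set.Ioo (1/4 : ℝ) 1,
        p ^ (M - φ) * (1 - p) ^ φ / betaFun (M - φ + 1) (φ + 1)) ∧
    (∫ b in Set.Ioi (0:ℝ),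
        (jcG b) ^ (M - φ) * (1 - jcG b) ^ φ * Real.exp (-(4/3) * b) /
          betaFun (M - φ + 1) (φ + 1)) ≤ 1 := by
  set B := betaFun (M - φ + 1) (φ + 1) with hBdef
  have hB : 0 < B := by
    rw [hBdef, betaFun]
    apply div_pos (mul_pos (Real.Gamma_pos_of_pos (by linarith)) (Real.Gamma_pos_of_pos (by linarith)))
      (Real.Gamma_pos_of_pos (by linarith))
  set g : ℝ → ℝ := fun p => p ^ (M - φ) * (1 - p) ^ φ / B with hgdef
  -- derivative of jcG
  have hderiv : ∀ x : ℝ, HasDerivAt jcG (-Real.exp (-(4/3) * x)) x := by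
    intro x
    have h1 : HasDerivAt (fun b : ℝ => -(4/3) * b) (-(4/3)) x := by
      simpa using (hasDerivAt_id x).const_mul (-(4/3) : ℝ)
    have h2 := h1.exp
    have h3 := (h2.const_mul (3/4 : ℝ)).const_add (1/4 : ℝ)
    convert h3 using 1
    · rfl
    · rfl
    · rfl
    ring
  -- injectivity
  have hinj : Set.InjOn jcG (Set.Ioi 0) := by
    intro x _ y _ h
    simp only [jcG] at h
    have : Real.exp (-(4/3) * x) = Real.exp (-(4/3) * y) := by linarith
    have := Real.exp_injective this
    linarith
  -- image
  have himg : jcG '' Set.Ioi 0 = Set.Ioo (1/4 : ℝ) 1 := by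
    ext p
    constructor
    · rintro ⟨b, hb, rfl⟩
      have hb0 : (0:ℝ) < b := hb
      have he1 : Real.exp (-(4/3) * b) < 1 := by
        rw [Real.exp_lt_one_iff]; nlinarith
      have he0 : 0 < Real.exp (-(4/3) * b) := Real.exp_pos _
      constructor <;> simp only [jcG] <;> nlinarith
    · rintro ⟨h1, h2⟩
      refine ⟨-(3/4) * Real.log ((4*p - 1)/3), ?_, ?_⟩
      · have ht : (4*p - 1)/3 < 1 := by linarith
        have ht0 : 0 < (4*p - 1)/3 := by linarith
        have := Real.log_neg ht0 ht
        simp only [Set.mem_Ioi]; nlinarith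
      · have ht0 : 0 < (4*p - 1)/3 := by linarith
        simp only [jcG]
        rw [show -(4/3) * (-(3/4) * Real.log ((4*p - 1)/3)) = Real.log ((4*p - 1)/3) by ring,
          Real.exp_log ht0]
        ring
  -- change of variables
  have key := integral_image_eq_integral_abs_deriv_smul (measurableSet_Ioi (a := (0:ℝ)))
    (fun x _ => (hderiv x).hasDerivWithinAt) hinj g
  rw [himg] at key
  have heq : (∫ b in Set.Ioi (0:ℝ),
      (jcG b) ^ (M - φ) * (1 - jcG b) ^ φ * Real.exp (-(4/3) * b) / B) =
      ∫ p in Set.Ioo (1/4 : ℝ) 1, g p := by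
    rw [key]
    apply setIntegral_congr_fun (measurableSet_Ioi)
    intro x _
    simp only [hgdef, smul_eq_mul, abs_neg, abs_of_pos (Real.exp_pos _)]
    ring
  constructor
  · exact heq
  · rw [heq]
    -- bound by the integral over Ioo 0 1
    have hmeas : Measurable g := by
      apply Measurable.div_const
      exact (measurable_id.pow_const _).mul ((measurable_const.sub measurable_id).pow_const _)
    have hval : (∫ p in Set.Ioo (0:ℝ) 1, g p) = 1 := by
      have h01 : (∫ p in Set.Ioo (0:ℝ) 1, p ^ (M - φ) * (1 - p) ^ φ) = B := by
        have := real_beta (M - φ + 1) (φ + 1) (by linarith) (by linarith)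
        rw [intervalIntegral.integral_of_le (by norm_num : (0:ℝ) ≤ 1),
          integral_Ioc_eq_integral_Ioo] at this
        simp only [add_sub_cancel_right] at this
        rw [this, hBdef, betaFun]
      simp only [hgdef, div_eq_mul_inv]
      rw [integral_mul_const, h01, mul_inv_cancel₀ hB.ne']
    have hint : IntegrableOn g (Set.Ioo (0:ℝ) 1) := by
      apply Integrable.mono' (g := fun _ => 1 / B)
      · exact integrableOn_const measure_Ioo_lt_top.ne
      · exact hmeas.aestronglyMeasurable
      · filter_upwards [ae_restrict_mem measurableSet_Ioo] with p hp
        have hp0 : (0:ℝ) ≤ p := le_of_lt hp.1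
        have hp1 : p ≤ 1 := le_of_lt hp.2
        have h1 : p ^ (M - φ) ≤ 1 := Real.rpow_le_one hp0 hp1 (by linarith)
        have h2 : (1 - p) ^ φ ≤ 1 := Real.rpow_le_one (by linarith) (by linarith) hφ0
        have h3 : 0 ≤ p ^ (M - φ) := Real.rpow_nonneg hp0 _
        have h4 : 0 ≤ (1 - p) ^ φ := Real.rpow_nonneg (by linarith) _
        rw [hgdef]
        simp only [Real.norm_eq_abs]
        rw [abs_of_nonneg (div_nonneg (mul_nonneg h3 h4) hB.le)]
        have : p ^ (M - φ) * (1 - p) ^ φ ≤ 1 := by nlinarith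
        gcongr
    have hmono : (∫ p in Set.Ioo (1/4:ℝ) 1, g p) ≤ ∫ p in Set.Ioo (0:ℝ) 1, g p := by
      apply setIntegral_mono_set hint
      · filter_upwards [ae_restrict_mem measurableSet_Ioo] with p hp
        have hp0 : (0:ℝ) ≤ p := le_of_lt hp.1
        exact div_nonneg (mul_nonneg (Real.rpow_nonneg hp0 _)
          (Real.rpow_nonneg (by linarith [hp.2]) _)) hB.le
      · exact HasSubset.Subset.eventuallyLE (fun p hp => ⟨by linarith [hp.1], hp.2⟩)
    linarith [hmono, hval.le]
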